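/- arXiv:2403.06756 — 4 statements merged into one kernel-verified Lean document; each statement's English description precedes it below -/
import Mathlib

section
/- Let m ≥ 1 be an integer and let C ∈ ℝ^{2m×2m} be symmetric positive definite with T1ᵀ C T1 = C. Then for every τ ∈ {−1,1}^{2m}, P(0_{2m}, Γ_{T1τ} C Γ_{T1τ}) = P(0_{2m}, Γ_τ C Γ_τ), where Γ_τ = diag(τ). -/
open MeasureTheory Real Matrix

/-- Multivariate Gaussian density `φ(x; μ, S)` on `ι → ℝ`. -/
noncomputable def gaussDensity {ι : Type*} [Fintype ι] [DecidableEq ι] (μ : ι → ℝ) (S : Matrix ι ι ℝ)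
    (x : ι → ℝ) : ℝ :=
  (2 * π) ^ (-(Fintype.card ι : ℝ) / 2) * S.det ^ (-(1 : ℝ) / 2) *
    Real.exp (-(1 / 2) * ((x - μ) ⬝ᵥ (S⁻¹ *ᵥ (x - μ))))

/-- Orthant probability `P(μ, S) = ∫_{(0,∞)^k} φ(x; μ, S) dx`. -/
noncomputable def orthantProb {ι : Type*} [Fintype ι] [DecidableEq ι] (μ : ι → ℝ) (S : Matrix ι ι ℝ) : ℝ :=
  ∫ x in {x : ι → ℝ | ∀ i, 0 < x i}, gaussDensity μ S x

/-- Schur complement `R(S, l) = Θ(S, l) − (1/S l l) r_l r_lᵀ`, indexed by `{i // i ≠ l}`. -/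
noncomputable def schurR {ι : Type*} (S : Matrix ι ι ℝ) (l : ι) :
    Matrix {i : ι // i ≠ l} {i : ι // i ≠ l} ℝ :=
  fun i j => S i.1 j.1 - S i.1 l * S j.1 l / S l l

/-- The vector `d(τ)` with `d(τ)(l) = τ(l) (2π S l l)^{-1/2} P(0, R(Γ_τ S Γ_τ, l))`. -/
noncomputable def dvec {ι : Type*} [Fintype ι] [DecidableEq ι] (S : Matrix ι ι ℝ)
    (τ : ι → ℝ) : ι → ℝ :=
  fun l => τ l * (2 * π * S l l) ^ (-(1 : ℝ) / 2) *
    orthantProb (0 : {i : ι // i ≠ l} → ℝ)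
      (schurR (Matrix.diagonal τ * S * Matrix.diagonal τ) l)


/-- Orthant probability is invariant under permuting the coordinates. -/
lemma orthantProb_submatrix {ι : Type*} [Fintype ι] [DecidableEq ι] (S : Matrix ι ι ℝ) (e : ι ≃ ι) :
    orthantProb 0 (S.submatrix e e) = orthantProb 0 S := by
  have hmp := volume_measurePreserving_piCongrLeft (fun _ : ι => ℝ) e
  set φ := MeasurableEquiv.piCongrLeft (fun _ : ι => ℝ) e with hφdef
  have hφ : ∀ (x : ι → ℝ) (i : ι), φ x i = x (e.symm i) := by
    intro x i
    have h1 : φ x = Equiv.piCongrLeft (fun _ : ι => ℝ) e x := by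
      rw [hφdef]; rfl
    rw [h1]
    conv_lhs => rw [← e.apply_symm_apply i]
    exact Equiv.piCongrLeft_apply_apply (fun _ : ι => ℝ) e x (e.symm i)
  have hemb : MeasurableEmbedding φ := φ.measurableEmbedding
  have key := hmp.setIntegral_preimage_emb hemb (gaussDensity 0 S) {x : ι → ℝ | ∀ i, 0 < x i}
  have hpre : φ ⁻¹' {x : ι → ℝ | ∀ i, 0 < x i} = {x : ι → ℝ | ∀ i, 0 < x i} := by
    ext x
    simp only [Set.mem_preimage, Set.mem_setOf_eq, hφ]
    exact ⟨fun h i => by simpa using h (e i), fun h i => h _⟩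
  rw [hpre] at key
  have hms : MeasurableSet {x : ι → ℝ | ∀ i, 0 < x i} := by
    have : {x : ι → ℝ | ∀ i, 0 < x i} = ⋂ i, {x : ι → ℝ | 0 < x i} := by ext; simp
    rw [this]
    exact MeasurableSet.iInter fun i =>
      measurableSet_lt measurable_const (measurable_pi_apply i)
  rw [orthantProb, orthantProb, ← key]
  refine setIntegral_congr_fun hms ?_
  intro x _
  have hdet : (S.submatrix e e).det = S.det := Matrix.det_submatrix_equiv_self e S
  have hquad : (φ x) ⬝ᵥ (S⁻¹ *ᵥ (φ x)) = x ⬝ᵥ ((S.submatrix e e)⁻¹ *ᵥ x) := by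
    rw [Matrix.inv_submatrix_equiv]
    simp only [dotProduct, Matrix.mulVec, dotProduct, hφ, Matrix.submatrix_apply]
    refine (Fintype.sum_equiv e (fun i => x i * ∑ j, S⁻¹ (e i) (e j) * x j)
      (fun i => x (e.symm i) * ∑ j, S⁻¹ i j * x (e.symm j)) fun i => ?_).symm
    simp only [Equiv.symm_apply_apply]
    congr 1
    exact Fintype.sum_equiv e _ _ fun j => by simp
  simp only [gaussDensity, sub_zero, hdet, hquad]

/-- The block matrix `T1 = [[0, I_m], [−I_m, 0]]` on `Fin m ⊕ Fin m`. -/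
noncomputable def T1 (m : ℕ) : Matrix (Fin m ⊕ Fin m) (Fin m ⊕ Fin m) ℝ :=
  Matrix.fromBlocks 0 1 (-1) 0

/-- if `C` is symmetric positive definite with `T1ᵀ C T1 = C`, then for every
sign vector `τ`, `P(0, Γ_{T1τ} C Γ_{T1τ}) = P(0, Γ_τ C Γ_τ)`. -/
theorem stmt5 {m : ℕ} (hm : 1 ≤ m) (C : Matrix (Fin m ⊕ Fin m) (Fin m ⊕ Fin m) ℝ)
    (hC : C.PosDef) (hT : (T1 m)ᵀ * C * T1 m = C)
    (τ : Fin m ⊕ Fin m → ℝ) (hτ : ∀ i, τ i = 1 ∨ τ i = -1) :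
    orthantProb (0 : Fin m ⊕ Fin m → ℝ)
        (Matrix.diagonal (T1 m *ᵥ τ) * C * Matrix.diagonal (T1 m *ᵥ τ)) =
      orthantProb (0 : Fin m ⊕ Fin m → ℝ) (Matrix.diagonal τ * C * Matrix.diagonal τ) := by
  set σ := Equiv.sumComm (Fin m) (Fin m) with hσ
  set ε : Fin m ⊕ Fin m → ℝ := Sum.elim (fun _ => (-1 : ℝ)) (fun _ => 1) with hε
  have hT1v : ∀ i, (T1 m *ᵥ τ) i = -ε i * τ (σ i) := by
    intro i
    cases i with
    | inl a =>
      simp [T1, Matrix.mulVec, dotProduct, Fintype.sum_sum_type, Matrix.fromBlocks,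
        Matrix.one_apply, hε, hσ]
    | inr a =>
      simp [T1, Matrix.mulVec, dotProduct, Fintype.sum_sum_type, Matrix.fromBlocks,
        Matrix.one_apply, hε, hσ]
  have hCs : ∀ i j, C (σ i) (σ j) = ε i * ε j * C i j := by
    intro i j
    have h : ((T1 m)ᵀ * C * T1 m) i j = C i j := by rw [hT]
    cases i with
    | inl a =>
      cases j with
      | inl b =>
        simp [T1, Matrix.mul_apply, Fintype.sum_sum_type, Matrix.fromBlocks,
          Matrix.one_apply, hε, hσ, Finset.sum_mul, Finset.mul_sum] at h ⊢
        linarith [h]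
      | inr b =>
        simp [T1, Matrix.mul_apply, Fintype.sum_sum_type, Matrix.fromBlocks,
          Matrix.one_apply, hε, hσ, Finset.sum_mul, Finset.mul_sum] at h ⊢
        linarith [h]
    | inr a =>
      cases j with
      | inl b =>
        simp [T1, Matrix.mul_apply, Fintype.sum_sum_type, Matrix.fromBlocks,
          Matrix.one_apply, hε, hσ, Finset.sum_mul, Finset.mul_sum] at h ⊢
        linarith [h]
      | inr b =>
        simp [T1, Matrix.mul_apply, Fintype.sum_sum_type, Matrix.fromBlocks,
          Matrix.one_apply, hε, hσ, Finset.sum_mul, Finset.mul_sum] at h ⊢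
        linarith [h]
  have hmat : Matrix.diagonal (T1 m *ᵥ τ) * C * Matrix.diagonal (T1 m *ᵥ τ) =
      (Matrix.diagonal τ * C * Matrix.diagonal τ).submatrix σ σ := by
    ext i j
    rw [Matrix.submatrix_apply, Matrix.mul_diagonal, Matrix.diagonal_mul,
      Matrix.mul_diagonal, Matrix.diagonal_mul, hT1v i, hT1v j, hCs i j]
    ring
  rw [hmat, orthantProb_submatrix]
end

section
/- Let m ≥ 1 be an integer and let C ∈ ℝ^{2m×2m} be symmetric positive definite with T1ᵀ C T1 = C. Then for every τ ∈ {−1,1}^{2m}, d(T1τ) = T1 · d(τ), where d is defined with respect to Σ = C. -/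
open MeasureTheory Real Matrix

section aux

lemma dot_reindex {ι κ : Type*} [Fintype ι] [Fintype κ] (e : κ ≃ ι) (A : Matrix ι ι ℝ)
    (x : κ → ℝ) :
    x ⬝ᵥ (A.submatrix e e) *ᵥ x = (fun i => x (e.symm i)) ⬝ᵥ A *ᵥ (fun i => x (e.symm i)) := by
  simp only [dotProduct, mulVec, Matrix.submatrix_apply]
  rw [← Equiv.sum_comp e (fun i => x (e.symm i) * ∑ j, A i j * x (e.symm j))]
  refine Finset.sum_congr rfl fun a _ => ?_
  rw [Equiv.symm_apply_apply]
  congr 1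
  rw [← Equiv.sum_comp e (fun j => A (e a) j * x (e.symm j))]
  simp

lemma orthant_reindex {ι κ : Type*} [Fintype ι] [DecidableEq ι] [Fintype κ] [DecidableEq κ]
    (e : κ ≃ ι) (S : Matrix ι ι ℝ) :
    orthantProb (0 : κ → ℝ) (S.submatrix e e) = orthantProb (0 : ι → ℝ) S := by
  have hF := MeasureTheory.volume_measurePreserving_piCongrLeft (fun _ : ι => ℝ) e
  have hemb : MeasurableEmbedding (MeasurableEquiv.piCongrLeft (fun _ : ι => ℝ) e) :=
    (MeasurableEquiv.piCongrLeft (fun _ : ι => ℝ) e).measurableEmbedding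
  have key := hF.setIntegral_preimage_emb hemb (gaussDensity (0 : ι → ℝ) S)
    {x : ι → ℝ | ∀ i, 0 < x i}
  rw [orthantProb, orthantProb, ← key]
  have happ : ∀ (x : κ → ℝ) (i : ι),
      (MeasurableEquiv.piCongrLeft (fun _ : ι => ℝ) e) x i = x (e.symm i) := by
    intro x i
    simp [MeasurableEquiv.piCongrLeft, Equiv.piCongrLeft, Equiv.piCongrLeft', Equiv.coe_fn_mk]
  have hset : (MeasurableEquiv.piCongrLeft (fun _ : ι => ℝ) e) ⁻¹' {x : ι → ℝ | ∀ i, 0 < x i}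
      = {x : κ → ℝ | ∀ i, 0 < x i} := by
    ext x
    simp only [Set.mem_preimage, Set.mem_setOf_eq, happ]
    constructor
    · intro h j; simpa using h (e j)
    · intro h i; exact h _
  rw [hset]
  have hmeas : MeasurableSet {x : κ → ℝ | ∀ i, 0 < x i} := by
    have : {x : κ → ℝ | ∀ i, 0 < x i} = Set.univ.pi (fun _ => Set.Ioi 0) := by ext x; simp
    rw [this]; exact MeasurableSet.univ_pi (fun _ => measurableSet_Ioi)
  apply setIntegral_congr_fun hmeas
  intro x _
  have hfx : (MeasurableEquiv.piCongrLeft (fun _ : ι => ℝ) e) x = fun i => x (e.symm i) :=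
    funext (happ x)
  simp only [gaussDensity, hfx, sub_zero,
    Fintype.card_congr e, Matrix.det_submatrix_equiv_self, Matrix.inv_submatrix_equiv]
  rw [dot_reindex e]

/-- schurR of a reindexed matrix. -/
lemma schurR_submatrix {ι κ : Type*} [DecidableEq ι] [DecidableEq κ] (e : κ ≃ ι)
    (S : Matrix ι ι ℝ) (l : κ) :
    schurR (S.submatrix e e) l =
      (schurR S (e l)).submatrix
        (fun i => (⟨e i.1, fun h => i.2 (e.injective h)⟩ : {j : ι // j ≠ e l}))
        (fun i => (⟨e i.1, fun h => i.2 (e.injective h)⟩ : {j : ι // j ≠ e l})) := rfl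

end aux


/-- if `C` is symmetric positive definite with `T1ᵀ C T1 = C`, then for every
sign vector `τ`, `d(T1 τ) = T1 · d(τ)`, where `d` is defined with respect to `Σ = C`. -/
theorem stmt6 {m : ℕ} (hm : 1 ≤ m) (C : Matrix (Fin m ⊕ Fin m) (Fin m ⊕ Fin m) ℝ)
    (hC : C.PosDef) (hT : (T1 m)ᵀ * C * T1 m = C)
    (τ : Fin m ⊕ Fin m → ℝ) (hτ : ∀ i, τ i = 1 ∨ τ i = -1) :
    dvec C (T1 m *ᵥ τ) = T1 m *ᵥ dvec C τ := by
  classical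
  set σ := T1 m *ᵥ τ with hσdef
  have hσ1 : ∀ i, σ (Sum.inl i) = τ (Sum.inr i) := by
    intro i
    simp [hσdef, T1, Matrix.mulVec, Matrix.fromBlocks, dotProduct, Fintype.sum_sum_type,
      Matrix.one_apply]
  have hσ2 : ∀ i, σ (Sum.inr i) = -τ (Sum.inl i) := by
    intro i
    simp [hσdef, T1, Matrix.mulVec, Matrix.fromBlocks, dotProduct, Fintype.sum_sum_type,
      Matrix.one_apply]
  -- entry facts from hT
  have hTentry : ∀ a b, ((T1 m)ᵀ * C * T1 m) a b = C a b := fun a b => by rw [hT]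
  have h1 : ∀ i j, C (Sum.inl i) (Sum.inl j) = C (Sum.inr i) (Sum.inr j) := by
    intro i j
    have := hTentry (Sum.inl i) (Sum.inl j)
    simp [T1, Matrix.mul_apply, Matrix.fromBlocks, Fintype.sum_sum_type, Matrix.one_apply,
      Finset.mul_sum, Finset.sum_ite_eq, Finset.sum_ite_eq'] at this
    linarith [this]
  have h2 : ∀ i j, C (Sum.inl i) (Sum.inr j) = -C (Sum.inr i) (Sum.inl j) := by
    intro i j
    have := hTentry (Sum.inl i) (Sum.inr j)
    simp [T1, Matrix.mul_apply, Matrix.fromBlocks, Fintype.sum_sum_type, Matrix.one_apply,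
      Finset.mul_sum, Finset.sum_ite_eq, Finset.sum_ite_eq'] at this
    linarith [this]
  set p : (Fin m ⊕ Fin m) ≃ (Fin m ⊕ Fin m) := Equiv.sumComm (Fin m) (Fin m) with hp
  -- key matrix identity
  have hkey : Matrix.diagonal σ * C * Matrix.diagonal σ
      = (Matrix.diagonal τ * C * Matrix.diagonal τ).submatrix p p := by
    ext a b
    simp only [Matrix.submatrix_apply, Matrix.mul_diagonal, Matrix.diagonal_mul]
    cases a with
    | inl i =>
      cases b with
      | inl j => simp [hp, hσ1, h1 i j]
      | inr j => simp only [hp, Equiv.sumComm_apply, Sum.swap_inl, Sum.swap_inr,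
          hσ1, hσ2, h2 i j]; ring
    | inr i =>
      cases b with
      | inl j => simp only [hp, Equiv.sumComm_apply, Sum.swap_inl, Sum.swap_inr,
          hσ1, hσ2, h2 i j]; ring
      | inr j => simp only [hp, Equiv.sumComm_apply, Sum.swap_inr, hσ2, hσ1, h1 i j]; ring
  -- now compute dvec componentwise
  funext l
  have hdiag : ∀ a, C a a = C (p a) (p a) := by
    intro a; cases a with
    | inl i => exact h1 i i
    | inr i => exact (h1 i i).symm
  have horth : orthantProb (0 : {i // i ≠ l} → ℝ)
        (schurR (Matrix.diagonal σ * C * Matrix.diagonal σ) l)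
      = orthantProb (0 : {i // i ≠ p l} → ℝ)
        (schurR (Matrix.diagonal τ * C * Matrix.diagonal τ) (p l)) := by
    rw [hkey]
    let e : {i // i ≠ l} ≃ {j // j ≠ p l} :=
      p.subtypeEquiv (fun a => not_congr ⟨fun h => h ▸ rfl, fun h => p.injective h⟩)
    have : schurR ((Matrix.diagonal τ * C * Matrix.diagonal τ).submatrix p p) l
        = (schurR (Matrix.diagonal τ * C * Matrix.diagonal τ) (p l)).submatrix e e := rfl
    rw [this]
    exact orthant_reindex e _
  cases l with
  | inl i =>
    have : (T1 m *ᵥ dvec C τ) (Sum.inl i) = dvec C τ (Sum.inr i) := by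
      simp [T1, Matrix.mulVec, Matrix.fromBlocks, dotProduct, Fintype.sum_sum_type,
        Matrix.one_apply]
    rw [this]
    simp only [dvec, horth, hσ1, hdiag (Sum.inl i)]
    rfl
  | inr i =>
    have : (T1 m *ᵥ dvec C τ) (Sum.inr i) = -dvec C τ (Sum.inl i) := by
      simp [T1, Matrix.mulVec, Matrix.fromBlocks, dotProduct, Fintype.sum_sum_type,
        Matrix.one_apply]
    rw [this]
    simp only [dvec, horth, hσ2, hdiag (Sum.inr i)]
    ring_nf
    rfl
end

section
/- Let J be a finite set, σ : J → J a bijection, O : J → (0,∞) a function with O(σ(j)) = O(j) for all j, and T ∈ ℝ^{n×n} with Tᵀ T = I_n and T² = −I_n. Let d : J → ℝⁿ satisfy d(σ(j)) = T · d(j) for all j, let a ∈ ℝⁿ and set b = −T a. Then ∑_{j∈J} (aᵀ d(j))(bᵀ d(j)) / O(j) = 0 and ∑_{j∈J} (aᵀ d(j))² / O(j) = ∑_{j∈J} (bᵀ d(j))² / O(j). (These identities imply that the Fisher information matrix of the one-bit detection problem is a scalar multiple υ² of the 2×2 identity matrix.) -/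
open Matrix

/-- for a finite set `J`, a bijection `σ` of `J`, positive weights `O` with
`O(σ j) = O j`, a matrix `T` with `TᵀT = I`, `T² = −I`, vectors `d j` with `d(σ j) = T d(j)`,
and `b = −T a`: `∑_j (aᵀ d_j)(bᵀ d_j)/O_j = 0` and `∑_j (aᵀ d_j)²/O_j = ∑_j (bᵀ d_j)²/O_j`. -/
theorem stmt8 {J : Type*} [Fintype J] (σ : J ≃ J) (O : J → ℝ) (hO : ∀ j, 0 < O j)
    (hOσ : ∀ j, O (σ j) = O j) {n : ℕ} (T : Matrix (Fin n) (Fin n) ℝ)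
    (hT1 : Tᵀ * T = 1) (hT2 : T * T = -1)
    (d : J → Fin n → ℝ) (hd : ∀ j, d (σ j) = T *ᵥ d j)
    (a b : Fin n → ℝ) (hb : b = -(T *ᵥ a)) :
    (∑ j, (a ⬝ᵥ d j) * (b ⬝ᵥ d j) / O j) = 0 ∧
    (∑ j, (a ⬝ᵥ d j) ^ 2 / O j) = ∑ j, (b ⬝ᵥ d j) ^ 2 / O j := by
  have hTt : Tᵀ = -T := by
    have h := congrArg (fun M => Tᵀ * M) hT2
    simp only [Matrix.mul_neg, Matrix.mul_one, ← Matrix.mul_assoc, hT1,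
      Matrix.one_mul] at h
    have h2 := congrArg Neg.neg h; rw [neg_neg] at h2; exact h2.symm
  have key1 : ∀ j, a ⬝ᵥ d (σ j) = b ⬝ᵥ d j := by
    intro j
    rw [hd, Matrix.dotProduct_mulVec, ← Matrix.mulVec_transpose, hTt, hb]
    rw [Matrix.neg_mulVec, neg_dotProduct]
  have key2 : ∀ j, b ⬝ᵥ d (σ j) = -(a ⬝ᵥ d j) := by
    intro j
    rw [hd, Matrix.dotProduct_mulVec, ← Matrix.mulVec_transpose, hb]
    have : Tᵀ *ᵥ (-(T *ᵥ a)) = -a := by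
      rw [Matrix.mulVec_neg, Matrix.mulVec_mulVec, hT1]
      simp
    rw [this]
    simp
  constructor
  · have h : (∑ j, (a ⬝ᵥ d j) * (b ⬝ᵥ d j) / O j)
        = ∑ j, (a ⬝ᵥ d (σ j)) * (b ⬝ᵥ d (σ j)) / O (σ j) :=
      (Equiv.sum_comp σ _).symm
    have h2 : (∑ j, (a ⬝ᵥ d (σ j)) * (b ⬝ᵥ d (σ j)) / O (σ j))
        = -∑ j, (a ⬝ᵥ d j) * (b ⬝ᵥ d j) / O j := by
      rw [← Finset.sum_neg_distrib]
      refine Finset.sum_congr rfl fun j _ => ?_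
      rw [key1, key2, hOσ]; ring
    linarith
  · calc (∑ j, (a ⬝ᵥ d j) ^ 2 / O j)
        = ∑ j, (a ⬝ᵥ d (σ j)) ^ 2 / O (σ j) := (Equiv.sum_comp σ _).symm
      _ = ∑ j, (b ⬝ᵥ d j) ^ 2 / O j := by
          refine Finset.sum_congr rfl fun j _ => by rw [key1, hOσ]
end

section
/- Let J be a finite set, σ : J → J a bijection, O : J → (0,∞) with O(σ(j)) = O(j) for all j, and O' : J → ℝ with O'(σ(j)) = O'(j) for all j. Let T ∈ ℝ^{n×n} with Tᵀ T = I_n and T² = −I_n, let d : J → ℝⁿ satisfy d(σ(j)) = T · d(j) for all j, let a ∈ ℝⁿ and set b = −T a. Then ∑_{j∈J} O'(j) (aᵀ d(j))(bᵀ d(j)) / O(j)² = 0 and ∑_{j∈J} O'(j) (aᵀ d(j))² / O(j)² = ∑_{j∈J} O'(j) (bᵀ d(j))² / O(j)². (These identities give the covariance matrix (υ₁²/υ²) I₂ of the normalized score vector under a mismatched noise covariance matrix.) -/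
open Matrix

/-- as in Statement 8, additionally with weights `O' : J → ℝ` invariant under
`σ`: `∑_j O'_j (aᵀ d_j)(bᵀ d_j)/O_j² = 0` and
`∑_j O'_j (aᵀ d_j)²/O_j² = ∑_j O'_j (bᵀ d_j)²/O_j²`. -/
theorem stmt9 {J : Type*} [Fintype J] (σ : J ≃ J) (O : J → ℝ) (hO : ∀ j, 0 < O j)
    (hOσ : ∀ j, O (σ j) = O j) (O' : J → ℝ) (hO'σ : ∀ j, O' (σ j) = O' j)
    {n : ℕ} (T : Matrix (Fin n) (Fin n) ℝ)
    (hT1 : Tᵀ * T = 1) (hT2 : T * T = -1)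
    (d : J → Fin n → ℝ) (hd : ∀ j, d (σ j) = T *ᵥ d j)
    (a b : Fin n → ℝ) (hb : b = -(T *ᵥ a)) :
    (∑ j, O' j * ((a ⬝ᵥ d j) * (b ⬝ᵥ d j)) / (O j) ^ 2) = 0 ∧
    (∑ j, O' j * (a ⬝ᵥ d j) ^ 2 / (O j) ^ 2) = ∑ j, O' j * (b ⬝ᵥ d j) ^ 2 / (O j) ^ 2 := by
  have hTt : Tᵀ = -T := by
    have h : Tᵀ * (T * T) = Tᵀ * (-1) := by rw [hT2]
    rw [← mul_assoc, hT1, one_mul] at h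
    calc Tᵀ = -(Tᵀ * (-1)) := by simp
    _ = -(T) := by rw [← h]
  have ha : ∀ j, a ⬝ᵥ d (σ j) = b ⬝ᵥ d j := by
    intro j
    rw [hd, dotProduct_mulVec, ← mulVec_transpose, hTt, hb]
    simp [neg_mulVec]
  have hbb : ∀ j, b ⬝ᵥ d (σ j) = -(a ⬝ᵥ d j) := by
    intro j
    rw [hd, dotProduct_mulVec, ← mulVec_transpose, hTt, hb]
    have : (-T) *ᵥ (-(T *ᵥ a)) = (T * T) *ᵥ a := by
      rw [neg_mulVec, mulVec_neg, neg_neg, mulVec_mulVec]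
    rw [this, hT2]
    simp [neg_mulVec]
  constructor
  · have h := Equiv.sum_comp σ
      (fun j => O' j * ((a ⬝ᵥ d j) * (b ⬝ᵥ d j)) / (O j) ^ 2)
    simp only [hO'σ, hOσ, ha, hbb] at h
    have h2 : ∀ j : J, O' j * (b ⬝ᵥ d j * -(a ⬝ᵥ d j)) / O j ^ 2
        = -(O' j * ((a ⬝ᵥ d j) * (b ⬝ᵥ d j)) / (O j) ^ 2) := by intro j; ring
    simp only [h2, Finset.sum_neg_distrib] at h
    linarith
  · have h := Equiv.sum_comp σ
      (fun j => O' j * (a ⬝ᵥ d j) ^ 2 / (O j) ^ 2)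
    simp only [hO'σ, hOσ, ha] at h
    exact h.symm
end
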